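/- Let ε ∈ (0,1), p = 1+ε, C_p = (ε/(1+ε))^((1+ε)/2)·((1−ε)/ε)^((1−ε)/2), and define φ: ℝ → ℝ by φ(x) = sign(x)·log(1 + |x| + C_p|x|^p). Then: (1) φ is Lipschitz with Lipschitz constant at most max{1 + p·C_p, p}; (2) for every x ≠ 0, |φ′(x)| ≤ p/|x|; (3) for every γ ∈ (0,1) there exists a constant C (depending on γ and p) such that |φ(x₁) − φ(x₂)| ≤ C·|x₁ − x₂|^γ for all x₁, x₂ ∈ ℝ. -/

import Mathlib

set_option linter.unusedSectionVars false
set_option maxHeartbeats 1000000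

open Real Set

noncomputable def gAux (Cp p x : ℝ) : ℝ := Real.log (1 + x + Cp * x ^ p)

noncomputable def DAux (Cp p x : ℝ) : ℝ :=
  (1 + Cp * (p * x ^ (p - 1))) / (1 + x + Cp * x ^ p)

section
variable {Cp p : ℝ} (hC : 0 < Cp) (hp1 : 1 < p)

include hC hp1

lemma fAux_pos {x : ℝ} (hx : 0 ≤ x) : 0 < 1 + x + Cp * x ^ p := by
  have := Real.rpow_nonneg hx p
  nlinarith

lemma gAux_zero : gAux Cp p 0 = 0 := by
  simp [gAux, Real.zero_rpow (by linarith : p ≠ 0)]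

lemma gAux_nonneg {x : ℝ} (hx : 0 ≤ x) : 0 ≤ gAux Cp p x := by
  apply Real.log_nonneg
  have := Real.rpow_nonneg hx p
  nlinarith

lemma gAux_mono {u v : ℝ} (hu : 0 ≤ u) (huv : u ≤ v) : gAux Cp p u ≤ gAux Cp p v := by
  apply Real.log_le_log (fAux_pos hC hp1 hu)
  have := Real.rpow_le_rpow hu huv (by linarith : (0:ℝ) ≤ p)
  nlinarith

lemma gAux_hasDerivAt {x : ℝ} (hx : 0 ≤ x) :
    HasDerivAt (gAux Cp p) (DAux Cp p x) x := by
  have h1 : HasDerivAt (fun t : ℝ => t ^ p) (p * x ^ (p - 1)) x :=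
    Real.hasDerivAt_rpow_const (Or.inr hp1.le)
  have hf : HasDerivAt (fun t : ℝ => 1 + t + Cp * t ^ p)
      (1 + Cp * (p * x ^ (p - 1))) x := by
    exact (((hasDerivAt_id x).const_add 1).add (h1.const_mul Cp))
  exact hf.log (ne_of_gt (fAux_pos hC hp1 hx))

lemma DAux_nonneg {x : ℝ} (hx : 0 ≤ x) : 0 ≤ DAux Cp p x := by
  apply div_nonneg _ (fAux_pos hC hp1 hx).le
  have h := Real.rpow_nonneg hx (p - 1)
  nlinarith [mul_nonneg (mul_nonneg hC.le (by linarith : (0:ℝ) ≤ p)) h]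

lemma DAux_le_max {x : ℝ} (hx : 0 ≤ x) :
    DAux Cp p x ≤ max (1 + p * Cp) p := by
  set M := max (1 + p * Cp) p with hM
  have hM1 : 1 + p * Cp ≤ M := le_max_left _ _
  have hMp : p ≤ M := le_max_right _ _
  have hxp := Real.rpow_nonneg hx p
  have hxp1 := Real.rpow_nonneg hx (p - 1)
  rw [DAux, div_le_iff₀ (fAux_pos hC hp1 hx)]
  have hM0 : (0:ℝ) ≤ M := by linarith
  rcases le_total x 1 with h1 | h1
  · have h3 : x ^ (p - 1) ≤ 1 := Real.rpow_le_one hx h1 (by linarith)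
    have h4 : 1 + Cp * (p * x ^ (p - 1)) ≤ M := by
      nlinarith [mul_nonneg (mul_nonneg hC.le (by linarith : (0:ℝ) ≤ p))
        (by linarith : (0:ℝ) ≤ 1 - x ^ (p - 1))]
    have h5 : M ≤ M * (1 + x + Cp * x ^ p) :=
      le_mul_of_one_le_right hM0 (by nlinarith)
    linarith
  · have h2 : x ^ (p - 1) ≤ x ^ p := by
      apply Real.rpow_le_rpow_of_exponent_le h1; linarith
    nlinarith [mul_le_mul_of_nonneg_left
        (mul_le_mul hMp h2 hxp1 hM0) hC.le,
      mul_nonneg hM0 hx, mul_nonneg (mul_nonneg hM0 hC.le) hxp]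

lemma DAux_le_div {x : ℝ} (hx : 0 < x) : DAux Cp p x ≤ p / x := by
  rw [DAux, div_le_div_iff₀ (fAux_pos hC hp1 hx.le) hx]
  have key : x ^ (p - 1) * x = x ^ p := by
    rw [← Real.rpow_add_one hx.ne', sub_add_cancel]
  have expand : (1 + Cp * (p * x ^ (p - 1))) * x = x + Cp * p * x ^ p := by
    rw [← key]; ring
  have hxp := Real.rpow_nonneg hx.le p
  nlinarith [expand, mul_nonneg (by linarith : (0:ℝ) ≤ p - 1) hx.le,
    mul_nonneg hC.le hxp]

lemma gAux_lipOn {d : ℝ} (hd : 0 ≤ d) {K : ℝ}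
    (hK : ∀ t ∈ Ici d, DAux Cp p t ≤ K) {x y : ℝ} (hx : x ∈ Ici d) (hy : y ∈ Ici d) :
    |gAux Cp p x - gAux Cp p y| ≤ K * |x - y| := by
  have := Convex.norm_image_sub_le_of_norm_hasDerivWithin_le
    (f := gAux Cp p) (f' := DAux Cp p) (s := Ici d)
    (fun t ht => (gAux_hasDerivAt hC hp1 (le_trans hd ht)).hasDerivWithinAt)
    (fun t ht => by
      rw [Real.norm_eq_abs, abs_of_nonneg (DAux_nonneg hC hp1 (le_trans hd ht))]
      exact hK t ht)
    (convex_Ici d) hy hx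
  simpa [Real.norm_eq_abs] using this

end



/-- The constant `C_p = (ε/(1+ε))^((1+ε)/2) * ((1-ε)/ε)^((1-ε)/2)` for `p = 1+ε`. -/
noncomputable def catoniConst (ε : ℝ) : ℝ :=
  (ε / (1 + ε)) ^ ((1 + ε) / 2) * ((1 - ε) / ε) ^ ((1 - ε) / 2)

/-- For `φ(x) = sign(x) log(1 + |x| + C_p |x|^p)`:
(1) `φ` is Lipschitz with constant at most `max (1 + p C_p) p`;
(2) `|φ'(x)| ≤ p / |x|` for `x ≠ 0`;
(3) for every `γ ∈ (0,1)` there is a constant `C` with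
`|φ x₁ - φ x₂| ≤ C |x₁ - x₂|^γ` for all `x₁, x₂`. -/
theorem stmt10 (ε : ℝ) (hε : ε ∈ Set.Ioo (0 : ℝ) 1)
    (p : ℝ) (hp : p = 1 + ε)
    (φ : ℝ → ℝ)
    (hφdef : ∀ x, φ x = Real.sign x * Real.log (1 + |x| + catoniConst ε * |x| ^ p)) :
    (∀ x y, |φ x - φ y| ≤ max (1 + p * catoniConst ε) p * |x - y|) ∧
    (∀ x : ℝ, x ≠ 0 → |deriv φ x| ≤ p / |x|) ∧
    (∀ γ ∈ Set.Ioo (0 : ℝ) 1, ∃ C : ℝ,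
      ∀ x₁ x₂ : ℝ, |φ x₁ - φ x₂| ≤ C * |x₁ - x₂| ^ γ) := by
  obtain ⟨hε0, hε1⟩ := hε
  set Cp := catoniConst ε with hCp
  have hC : 0 < Cp := by
    apply mul_pos
    · exact Real.rpow_pos_of_pos (div_pos hε0 (by linarith)) _
    · exact Real.rpow_pos_of_pos (div_pos (by linarith) hε0) _
  have hp1 : 1 < p := by rw [hp]; linarith
  set M := max (1 + p * Cp) p with hM
  have hMp : p ≤ M := le_max_right _ _
  have hM0 : (0:ℝ) ≤ M := by linarith
  -- φ agrees with gAux on nonnegatives, and is odd-like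
  have hφg : ∀ x : ℝ, 0 ≤ x → φ x = gAux Cp p x := by
    intro x hx
    rcases eq_or_lt_of_le hx with rfl | hx'
    · rw [hφdef]; simp [gAux_zero hC hp1]
    · rw [hφdef, Real.sign_of_pos hx', abs_of_pos hx', one_mul, gAux]
  have hφneg : ∀ x : ℝ, x ≤ 0 → φ x = -gAux Cp p (-x) := by
    intro x hx
    rcases eq_or_lt_of_le hx with rfl | hx'
    · rw [hφdef]; simp [gAux_zero hC hp1]
    · rw [hφdef, Real.sign_of_neg hx', abs_of_neg hx', gAux]; ring
  -- Lipschitz on the nonnegative half line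
  have lip : ∀ x ∈ Ici (0:ℝ), ∀ y ∈ Ici (0:ℝ),
      |gAux Cp p x - gAux Cp p y| ≤ M * |x - y| :=
    fun x hx y hy => gAux_lipOn hC hp1 le_rfl
      (fun t ht => DAux_le_max hC hp1 ht) hx hy
  have gnn : ∀ x : ℝ, 0 ≤ x → 0 ≤ gAux Cp p x := fun x hx => gAux_nonneg hC hp1 hx
  have glin : ∀ x : ℝ, 0 ≤ x → gAux Cp p x ≤ M * x := by
    intro x hx
    have h := lip x hx 0 Set.self_mem_Ici
    rw [gAux_zero hC hp1, sub_zero, abs_of_nonneg (gnn x hx), sub_zero,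
      abs_of_nonneg hx] at h
    exact h
  -- Part 1
  have key1 : ∀ x y, |φ x - φ y| ≤ M * |x - y| := by
    intro x y
    rcases le_total 0 x with hx | hx <;> rcases le_total 0 y with hy | hy
    · rw [hφg x hx, hφg y hy]; exact lip x hx y hy
    · rw [hφg x hx, hφneg y hy, sub_neg_eq_add,
        abs_of_nonneg (add_nonneg (gnn x hx) (gnn _ (by linarith))),
        abs_of_nonneg (by linarith : (0:ℝ) ≤ x - y)]
      have h1 := glin x hx; have h2 := glin (-y) (by linarith)
      linarith
    · rw [hφneg x hx, hφg y hy, abs_sub_comm, sub_neg_eq_add,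
        abs_of_nonneg (add_nonneg (gnn y hy) (gnn _ (by linarith))),
        abs_sub_comm, abs_of_nonneg (by linarith : (0:ℝ) ≤ y - x)]
      have h1 := glin (-x) (by linarith); have h2 := glin y hy
      linarith
    · rw [hφneg x hx, hφneg y hy,
        show -gAux Cp p (-x) - -gAux Cp p (-y)
          = -(gAux Cp p (-x) - gAux Cp p (-y)) by ring, abs_neg]
      have h := lip (-x) (by simp; linarith) (-y) (by simp; linarith)
      rw [show -x - -y = -(x - y) by ring, abs_neg] at h
      exact h
  -- Part 2
  have part2 : ∀ x : ℝ, x ≠ 0 → |deriv φ x| ≤ p / |x| := by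
    intro x hx
    rcases hx.lt_or_gt with hx | hx
    · have hev : φ =ᶠ[nhds x] fun t => -gAux Cp p (-t) := by
        filter_upwards [Iio_mem_nhds hx] with t ht
        exact hφneg t (le_of_lt ht)
      have hd : HasDerivAt (fun t : ℝ => -gAux Cp p (-t)) (DAux Cp p (-x)) x := by
        have h1 := (gAux_hasDerivAt hC hp1 (by linarith : (0:ℝ) ≤ -x)).comp x
          (hasDerivAt_neg x)
        have h2 : HasDerivAt (fun t : ℝ => -gAux Cp p (-t)) (-(DAux Cp p (-x) * -1)) x := h1.neg
        rwa [show -(DAux Cp p (-x) * -1) = DAux Cp p (-x) by ring] at h2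
      rw [hev.deriv_eq, hd.deriv,
        abs_of_nonneg (DAux_nonneg hC hp1 (by linarith : (0:ℝ) ≤ -x)), abs_of_neg hx]
      exact DAux_le_div hC hp1 (by linarith)
    · have hev : φ =ᶠ[nhds x] gAux Cp p := by
        filter_upwards [Ioi_mem_nhds hx] with t ht
        exact hφg t (le_of_lt ht)
      rw [hev.deriv_eq, (gAux_hasDerivAt hC hp1 hx.le).deriv,
        abs_of_nonneg (DAux_nonneg hC hp1 hx.le), abs_of_pos hx]
      exact DAux_le_div hC hp1 hx
  have habsφ : ∀ t : ℝ, |φ t| = gAux Cp p |t| := by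
    intro t
    rcases le_total 0 t with ht | ht
    · rw [hφg t ht, abs_of_nonneg ht, abs_of_nonneg (gnn t ht)]
    · rw [hφneg t ht, abs_of_nonpos ht, abs_neg, abs_of_nonneg (gnn _ (by linarith))]
  refine ⟨key1, part2, ?_⟩
  -- Part 3
  rintro γ ⟨hγ0, hγ1⟩
  set A := Real.log (3 + Cp * (2:ℝ) ^ p) with hA
  have h2p : (0:ℝ) ≤ (2:ℝ) ^ p := Real.rpow_nonneg (by norm_num) p
  have hA0 : 0 ≤ A := Real.log_nonneg (by nlinarith)
  have hp0 : (0:ℝ) ≤ p := by linarith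
  refine ⟨M + p + 2 * A + 2 * p / γ, ?_⟩
  intro a b
  set d := |a - b| with hd
  have hd0 : 0 ≤ d := abs_nonneg _
  rcases eq_or_lt_of_le hd0 with hd0' | hd0'
  · have hab : a = b := by
      have : |a - b| = 0 := hd0'.symm
      rwa [abs_eq_zero, sub_eq_zero] at this
    rw [hab, sub_self, abs_zero,
      show d ^ γ = 0 from by rw [hd, hab, sub_self, abs_zero,
        Real.zero_rpow (ne_of_gt hγ0)], mul_zero]
  have hdγ0 : (0:ℝ) ≤ d ^ γ := Real.rpow_nonneg hd0 γ
  rcases le_total d 1 with hdle | hd1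
  · -- small distance: use Lipschitz
    have hdd : d ≤ d ^ γ := by
      have := Real.rpow_le_rpow_of_exponent_ge hd0' hdle hγ1.le
      rwa [Real.rpow_one] at this
    have h2 : 0 ≤ 2 * p / γ := by positivity
    calc |φ a - φ b| ≤ M * d := key1 a b
      _ ≤ M * d ^ γ := mul_le_mul_of_nonneg_left hdd hM0
      _ ≤ (M + p + 2 * A + 2 * p / γ) * d ^ γ := by
          have expand : (M + p + 2 * A + 2 * p / γ) * d ^ γ
              = M * d ^ γ + p * d ^ γ + 2 * A * d ^ γ + 2 * p / γ * d ^ γ := by ring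
          have h5 : 0 ≤ 2 * p / γ * d ^ γ := by positivity
          have h6 := mul_nonneg hp0 hdγ0
          have h7 := mul_nonneg (mul_nonneg (by norm_num : (0:ℝ) ≤ 2) hA0) hdγ0
          linarith
  · -- large distance
    have hdγ1 : (1:ℝ) ≤ d ^ γ := Real.one_le_rpow hd1 hγ0.le
    have lipd : ∀ w z : ℝ, d ≤ w → d ≤ z → |w - z| = d →
        |gAux Cp p w - gAux Cp p z| ≤ p := by
      intro w z hw hz hwz
      have h := gAux_lipOn hC hp1 (le_trans (by norm_num) hd1 : (0:ℝ) ≤ d)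
        (fun t ht => le_trans (DAux_le_div hC hp1 (lt_of_lt_of_le hd0' ht))
          (div_le_div_of_nonneg_left hp0 hd0' ht)) hw hz
      rw [hwz, div_mul_cancel₀ p (ne_of_gt hd0')] at h
      exact h
    have main : ∀ u v : ℝ, |u - v| = d → |u| ≤ |v| →
        |φ u - φ v| ≤ (M + p + 2 * A + 2 * p / γ) * d ^ γ := by
      intro u v huv hle
      rcases le_total |u| d with hud | hud
      · -- both at most 2d in absolute value
        have hvd : |v| ≤ 2 * d := by
          have h1 := abs_sub_abs_le_abs_sub v u
          rw [abs_sub_comm, huv] at h1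
          linarith
        have hgu : gAux Cp p |u| ≤ gAux Cp p (2 * d) :=
          gAux_mono hC hp1 (abs_nonneg u) (by linarith)
        have hgv : gAux Cp p |v| ≤ gAux Cp p (2 * d) :=
          gAux_mono hC hp1 (abs_nonneg v) hvd
        have hgd2 : gAux Cp p (2 * d) ≤ A + p * Real.log d := by
          have h1 : (2 * d) ^ p = 2 ^ p * d ^ p := Real.mul_rpow (by norm_num) hd0
          have hdp1 : (1:ℝ) ≤ d ^ p := Real.one_le_rpow hd1 hp0
          have hdp : d ≤ d ^ p := by
            have := Real.rpow_le_rpow_of_exponent_le hd1 hp1.le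
            rwa [Real.rpow_one] at this
          have harg : 1 + 2 * d + Cp * (2 * d) ^ p ≤ (3 + Cp * 2 ^ p) * d ^ p := by
            rw [h1]; nlinarith [mul_nonneg hC.le h2p]
          have hAne : (3 : ℝ) + Cp * 2 ^ p ≠ 0 := by nlinarith
          have hdpne : d ^ p ≠ 0 := ne_of_gt (Real.rpow_pos_of_pos hd0' p)
          calc gAux Cp p (2 * d) ≤ Real.log ((3 + Cp * 2 ^ p) * d ^ p) :=
                Real.log_le_log (fAux_pos hC hp1 (by linarith)) harg
            _ = A + p * Real.log d := by
                rw [Real.log_mul hAne hdpne, Real.log_rpow hd0']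
        have hlogd : Real.log d ≤ d ^ γ / γ := by
          have h := Real.log_le_sub_one_of_pos (Real.rpow_pos_of_pos hd0' γ)
          rw [Real.log_rpow hd0'] at h
          rw [le_div_iff₀ hγ0]; nlinarith
        have step : |φ u - φ v| ≤ 2 * (A + p * Real.log d) := by
          have h1 : |φ u - φ v| ≤ |φ u| + |φ v| := abs_sub _ _
          rw [habsφ u, habsφ v] at h1
          linarith
        have e1 : A ≤ A * d ^ γ := le_mul_of_one_le_right hA0 hdγ1
        have e2 : p * Real.log d ≤ p * (d ^ γ / γ) :=
          mul_le_mul_of_nonneg_left hlogd hp0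
        have e3 : 2 * (p * (d ^ γ / γ)) = 2 * p / γ * d ^ γ := by
          field_simp
        have expand : (M + p + 2 * A + 2 * p / γ) * d ^ γ
            = M * d ^ γ + p * d ^ γ + 2 * A * d ^ γ + 2 * p / γ * d ^ γ := by ring
        have e4 : 2 * A ≤ 2 * A * d ^ γ := by nlinarith
        linarith [mul_nonneg hM0 hdγ0, mul_nonneg hp0 hdγ0]
      · -- both far from 0, same sign
        obtain ⟨l1, l2⟩ := abs_le.mp (le_of_eq huv)
        have hvd : d ≤ |v| := le_trans hud hle
        have hfar : |φ u - φ v| ≤ p := by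
          rcases le_or_gt 0 u with hu | hu <;> rcases le_or_gt 0 v with hv | hv
          · rw [abs_of_nonneg hu] at hud
            rw [abs_of_nonneg hv] at hvd
            rw [hφg u hu, hφg v hv]
            exact lipd u v hud hvd huv
          · exfalso
            rw [abs_of_nonneg hu] at hud
            rw [abs_of_neg hv] at hvd
            linarith
          · exfalso
            rw [abs_of_neg hu] at hud
            rw [abs_of_nonneg hv] at hvd
            linarith
          · rw [abs_of_neg hu] at hud
            rw [abs_of_neg hv] at hvd
            rw [hφneg u hu.le, hφneg v hv.le,
              show -gAux Cp p (-u) - -gAux Cp p (-v)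
                = -(gAux Cp p (-u) - gAux Cp p (-v)) by ring, abs_neg]
            exact lipd (-u) (-v) hud hvd
              (by rw [show -u - -v = -(u - v) by ring, abs_neg]; exact huv)
        have : p ≤ p * d ^ γ := le_mul_of_one_le_right hp0 hdγ1
        have h4 : 0 ≤ 2 * p / γ * d ^ γ := by positivity
        have expand : (M + p + 2 * A + 2 * p / γ) * d ^ γ
            = M * d ^ γ + p * d ^ γ + 2 * A * d ^ γ + 2 * p / γ * d ^ γ := by ring
        linarith [mul_nonneg hM0 hdγ0, mul_nonneg (by linarith : (0:ℝ) ≤ 2 * A) hdγ0]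
    rcases le_total |a| |b| with h | h
    · exact main a b rfl h
    · rw [abs_sub_comm]
      exact main b a (by rw [abs_sub_comm]) h
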